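/- A tuple T = [m_1, ..., m_r] of integers is a type (i.e. satisfies r ≥ 3, 2 ≤ m_1 ≤ ... ≤ m_r, Θ(T) > 0, α(T) := 4/Θ(T) ∈ ℕ, and m_i ∣ α(T) for all i) if and only if T is one of the following 53 tuples: [2,3,7], [2,3,8], [2,4,5], [2,3,9], [2,3,10], [2,3,12], [2,4,6], [3,3,4], [2,3,14], [2,5,5], [2,3,18], [2,4,8], [2,3,30], [2,5,6], [3,3,5], [2,4,12], [2,6,6], [3,4,4], [3,3,6], [2,2,2,3], [3,3,7], [2,4,20], [2,5,10], [2,6,9], [3,3,9], [2,8,8], [4,4,4], [2,2,2,4], [3,5,5], [3,3,15], [2,7,14], [2,12,12], [3,4,12], [3,6,6], [4,4,6], [2,2,2,6], [2,2,3,3], [5,5,5], [2,2,2,10], [3,9,9], [4,8,8], [2,2,4,4], [2,2,2,2,2], [7,7,7], [2,2,6,6], [2,3,3,6], [3,3,3,3], [2,2,2,2,3], [4,4,4,4], [2,2,2,4,4], [2,2,2,2,2,2], [3,3,3,3,3], [2,2,2,2,2,2,2,2]. -/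

import Mathlib

set_option linter.all false
set_option maxHeartbeats 1600000

/-- For a tuple `T = [m₁, ..., m_r]`, `Θ(T) := -2 + ∑ᵢ (1 - 1/mᵢ)` as a rational number. -/
def Theta (T : List ℕ) : ℚ :=
  -2 + (T.map (fun m => 1 - (1 : ℚ) / m)).sum

/-- `T` is a type: `T = [m₁, ..., m_r]` with `r ≥ 3`, `2 ≤ m₁ ≤ ... ≤ m_r`, `Θ(T) > 0`,
`α(T) = 4/Θ(T)` a positive integer, and `mᵢ ∣ α(T)` for all `i`. -/
def IsType (T : List ℕ) : Prop :=
  3 ≤ T.length ∧ T.Pairwise (· ≤ ·) ∧ (∀ m ∈ T, 2 ≤ m) ∧ 0 < Theta T ∧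
    ∃ a : ℕ, 0 < a ∧ (a : ℚ) * Theta T = 4 ∧ ∀ m ∈ T, m ∣ a

def typesList : List (List ℕ) := [
      [2,3,7], [2,3,8], [2,4,5], [2,3,9], [2,3,10],
      [2,3,12], [2,4,6], [3,3,4], [2,3,14], [2,5,5],
      [2,3,18], [2,4,8], [2,3,30], [2,5,6], [3,3,5],
      [2,4,12], [2,6,6], [3,4,4], [3,3,6], [2,2,2,3],
      [3,3,7], [2,4,20], [2,5,10], [2,6,9], [3,3,9],
      [2,8,8], [4,4,4], [2,2,2,4], [3,5,5], [3,3,15],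
      [2,7,14], [2,12,12], [3,4,12], [3,6,6], [4,4,6],
      [2,2,2,6], [2,2,3,3], [5,5,5], [2,2,2,10], [3,9,9],
      [4,8,8], [2,2,4,4], [2,2,2,2,2], [7,7,7], [2,2,6,6],
      [2,3,3,6], [3,3,3,3], [2,2,2,2,3], [4,4,4,4], [2,2,2,4,4],
      [2,2,2,2,2,2], [3,3,3,3,3], [2,2,2,2,2,2,2,2] ]

lemma coe_eq : ∀ (T : List ℕ), (do let a ← T; pure ((a:ℚ)) : List ℚ) = T.map (fun n : ℕ => (n:ℚ))
  | [] => rfl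
  | m :: T => by
    show (m:ℚ) :: (do let a ← T; pure ((a:ℚ)) : List ℚ) = _
    rw [coe_eq T, List.map_cons]

lemma theta_eq (T : List ℕ) :
    Theta T = -2 + (T.map (fun m : ℕ => 1 - (1:ℚ)/(m:ℚ))).sum := by
  rw [Theta, coe_eq, List.map_map]
  rfl

lemma inv_sum (a : ℕ) : ∀ (T : List ℕ), (∀ m ∈ T, 2 ≤ m) → (∀ m ∈ T, m ∣ a) →
    (a : ℚ) * (T.map (fun m : ℕ => (1:ℚ)/(m:ℚ))).sum = ((T.map (a / ·)).sum : ℕ)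
  | [], _, _ => by simp
  | m :: T, h2, hd => by
    have ih := inv_sum a T (fun x hx => h2 x (List.mem_cons_of_mem _ hx))
      (fun x hx => hd x (List.mem_cons_of_mem _ hx))
    have hm2 : 2 ≤ m := h2 m (List.mem_cons_self)
    have hmd : m ∣ a := hd m (List.mem_cons_self)
    have hm0 : (m:ℚ) ≠ 0 := by
      have : (0:ℚ) < m := by exact_mod_cast Nat.lt_of_lt_of_le (by norm_num) hm2
      exact this.ne'
    have hcast : ((a / m : ℕ) : ℚ) = (a : ℚ) / m := Nat.cast_div hmd hm0
    simp only [List.map_cons, List.sum_cons, mul_add, ih, Nat.cast_add, hcast]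
    rw [mul_one_div]

lemma one_sub_sum : ∀ (T : List ℕ),
    (T.map (fun m : ℕ => 1 - (1:ℚ)/(m:ℚ))).sum
      = T.length - (T.map (fun m : ℕ => (1:ℚ)/(m:ℚ))).sum
  | [] => by simp
  | m :: T => by
    simp only [List.map_cons, List.sum_cons, List.length_cons, one_sub_sum T]
    push_cast
    ring

lemma nat_equation {a : ℕ} {T : List ℕ} (h2 : ∀ m ∈ T, 2 ≤ m) (hd : ∀ m ∈ T, m ∣ a)
    (h : (a:ℚ) * Theta T = 4) : a * T.length = 2 * a + (T.map (a / ·)).sum + 4 := by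
  have key := inv_sum a T h2 hd
  rw [theta_eq, one_sub_sum] at h
  have : ((a * T.length : ℕ) : ℚ) = ((2 * a + (T.map (a / ·)).sum + 4 : ℕ) : ℚ) := by
    push_cast
    push_cast at key
    nlinarith [key, h]
  exact_mod_cast this

lemma two_mul_sum_le {a : ℕ} : ∀ {T : List ℕ}, (∀ m ∈ T, 2 ≤ m) → (∀ m ∈ T, m ∣ a) →
    2 * (T.map (a / ·)).sum ≤ T.length * a
  | [], _, _ => by simp
  | m :: T, h2, hd => by
    have ih := two_mul_sum_le (T := T) (fun x hx => h2 x (List.mem_cons_of_mem _ hx))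
      (fun x hx => hd x (List.mem_cons_of_mem _ hx))
    have hm2 : 2 ≤ m := h2 m (List.mem_cons_self)
    have hmd : m ∣ a := hd m (List.mem_cons_self)
    have h1 : 2 * (a / m) ≤ a := by
      calc 2 * (a/m) ≤ m * (a/m) := Nat.mul_le_mul_right _ hm2
      _ = a := Nat.mul_div_cancel' hmd
    simp only [List.map_cons, List.sum_cons, List.length_cons]
    ring_nf
    omega

lemma kb {m m' k a : ℕ} (hmm' : m ≤ m') (h : a = m' * k) : m * k ≤ a := by
  subst h; exact Nat.mul_le_mul_right k hmm'
lemma kpos {m k a : ℕ} (ha : 0 < a) (h : a = m * k) : 1 ≤ k := by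
  rcases Nat.eq_zero_or_pos k with rfl | h1
  · simp at h; omega
  · exact h1
lemma mle {m k a : ℕ} (h : a = m * k) (hk : 1 ≤ k) : m ≤ a := by
  subst h; exact Nat.le_mul_of_pos_right m hk

lemma too_long {a : ℕ} {T : List ℕ} (ha2 : 2 ≤ a) (h9 : 9 ≤ T.length)
    (heqN : a * T.length = 2 * a + (T.map (a / ·)).sum + 4)
    (hs2 : 2 * (T.map (a / ·)).sum ≤ T.length * a) : False := by
  set n := T.length
  set s := (T.map (a / ·)).sum
  have hc : n * a = a * n := Nat.mul_comm n a
  rw [hc] at hs2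
  have h9a : 9 * a ≤ a * n := by rw [← hc]; exact Nat.mul_le_mul_right a h9
  omega

lemma isType_of (T : List ℕ) (a : ℕ) (h1 : 3 ≤ T.length) (hs : T.Pairwise (· ≤ ·))
    (h3 : ∀ m ∈ T, 2 ≤ m) (ha : 0 < a) (h4 : (a:ℚ) * Theta T = 4)
    (h5 : ∀ m ∈ T, m ∣ a) : IsType T := by
  refine ⟨h1, hs, h3, ?_, a, ha, h4, h5⟩
  by_contra hc
  push_neg at hc
  have ha' : (0:ℚ) < a := by exact_mod_cast ha
  have : (a:ℚ) * Theta T ≤ 0 := mul_nonpos_of_nonneg_of_nonpos ha'.le hc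
  linarith


set_option maxHeartbeats 1600000 in
lemma r3 (a m1 m2 m3 : ℕ) (ha : 0 < a) (h12 : m1 ≤ m2) (h23 : m2 ≤ m3) (hm1 : 2 ≤ m1)
    (hd1 : m1 ∣ a) (hd2 : m2 ∣ a) (hd3 : m3 ∣ a)
    (heq : a * 3 = 2*a + (a/m1 + a/m2 + a/m3) + 4) :
    [m1, m2, m3] ∈ typesList := by
  obtain ⟨k1, hk1⟩ := hd1
  obtain ⟨k2, hk2⟩ := hd2
  obtain ⟨k3, hk3⟩ := hd3
  have e1 : a / m1 = k1 := by rw [hk1]; exact Nat.mul_div_cancel_left _ (by omega)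
  have e2 : a / m2 = k2 := by rw [hk2]; exact Nat.mul_div_cancel_left _ (by omega)
  have e3 : a / m3 = k3 := by rw [hk3]; exact Nat.mul_div_cancel_left _ (by omega)
  rw [e1, e2, e3] at heq
  have hp1 : 1 ≤ k1 := kpos ha hk1
  have hp2 : 1 ≤ k2 := kpos ha hk2
  have hp3 : 1 ≤ k3 := kpos ha hk3
  have hma1 : m1 ≤ a := mle hk1 hp1
  have hma2 : m2 ≤ a := mle hk2 hp2
  have hma3 : m3 ≤ a := mle hk3 hp3
  have hm2' : 2 ≤ m2 := hm1.trans h12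
  have hm3' : 2 ≤ m3 := hm2'.trans h23
  rcases Nat.lt_or_ge m1 4 with h4 | h4
  · interval_cases m1
    · rcases Nat.lt_or_ge m2 7 with h7 | h7
      · interval_cases m2
        · exfalso; omega
        · -- [2,3,*]
          obtain ⟨b, rfl⟩ : ∃ b, a = 6 * b := ⟨a / 6, by omega⟩
          have hkk : k3 = b - 4 := by omega
          subst hkk
          have hdvA : (b - 4) ∣ 6 * b := ⟨m3, hk3.trans (Nat.mul_comm _ _)⟩
          have hdv1 : (b - 4) ∣ 6 * b := hdvA
          have hdv : (b - 4) ∣ 24 := by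
            have h2' : (b - 4) ∣ 6 * (b - 4) := dvd_mul_left _ _
            have h3' := Nat.dvd_sub hdv1 h2'
            have h4' : 6 * b - 6 * (b - 4) = 24 := by omega
            rwa [h4'] at h3'
          have hble : b ≤ 28 := by have := Nat.le_of_dvd (by norm_num) hdv; omega
          have key : m3 = 7 ∨ m3 = 8 ∨ m3 = 9 ∨ m3 = 10 ∨ m3 = 12 ∨ m3 = 14 ∨ m3 = 18 ∨ m3 = 30 := by
            have hbge : 1 ≤ b := by omega
            interval_cases b <;> omega
          rcases key with rfl | rfl | rfl | rfl | rfl | rfl | rfl | rfl <;> decide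
        · -- [2,4,*]
          obtain ⟨c, rfl⟩ : ∃ c, a = 4 * c := ⟨a / 4, by omega⟩
          have hkk : k3 = c - 4 := by omega
          subst hkk
          have hdvA : (c - 4) ∣ 4 * c := ⟨m3, hk3.trans (Nat.mul_comm _ _)⟩
          have hdv1 : (c - 4) ∣ 4 * c := hdvA
          have hdv : (c - 4) ∣ 16 := by
            have h2' : (c - 4) ∣ 4 * (c - 4) := dvd_mul_left _ _
            have h3' := Nat.dvd_sub hdv1 h2'
            have h4' : 4 * c - 4 * (c - 4) = 16 := by omega
            rwa [h4'] at h3'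
          have hble : c ≤ 20 := by have := Nat.le_of_dvd (by norm_num) hdv; omega
          have key : m3 = 5 ∨ m3 = 6 ∨ m3 = 8 ∨ m3 = 12 ∨ m3 = 20 := by
            have hbge : 1 ≤ c := by omega
            interval_cases c <;> omega
          rcases key with rfl | rfl | rfl | rfl | rfl <;> decide
        · -- [2,5,*]
          obtain ⟨d, rfl⟩ : ∃ d, a = 10 * d := ⟨a / 10, by omega⟩
          have hkk : k3 = 3 * d - 4 := by omega
          subst hkk
          have hdvA : (3 * d - 4) ∣ 10 * d := ⟨m3, hk3.trans (Nat.mul_comm _ _)⟩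
          have hdv1 : (3 * d - 4) ∣ 3 * (10 * d) := hdvA.mul_left 3
          have hdv : (3 * d - 4) ∣ 40 := by
            have h2' : (3 * d - 4) ∣ 10 * (3 * d - 4) := dvd_mul_left _ _
            have h3' := Nat.dvd_sub hdv1 h2'
            have h4' : 3 * (10 * d) - 10 * (3 * d - 4) = 40 := by omega
            rwa [h4'] at h3'
          have hble : d ≤ 44 := by have := Nat.le_of_dvd (by norm_num) hdv; omega
          have key : m3 = 5 ∨ m3 = 6 ∨ m3 = 10 := by
            have hbge : 1 ≤ d := by omega
            interval_cases d <;> omega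
          rcases key with rfl | rfl | rfl <;> decide
        · -- [2,6,*]
          obtain ⟨b, rfl⟩ : ∃ b, a = 6 * b := ⟨a / 6, by omega⟩
          have hkk : k3 = 2 * b - 4 := by omega
          subst hkk
          have hdvA : (2 * b - 4) ∣ 6 * b := ⟨m3, hk3.trans (Nat.mul_comm _ _)⟩
          have hdv1 : (2 * b - 4) ∣ 2 * (6 * b) := hdvA.mul_left 2
          have hdv : (2 * b - 4) ∣ 24 := by
            have h2' : (2 * b - 4) ∣ 6 * (2 * b - 4) := dvd_mul_left _ _
            have h3' := Nat.dvd_sub hdv1 h2'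
            have h4' : 2 * (6 * b) - 6 * (2 * b - 4) = 24 := by omega
            rwa [h4'] at h3'
          have hble : b ≤ 28 := by have := Nat.le_of_dvd (by norm_num) hdv; omega
          have key : m3 = 6 ∨ m3 = 9 := by
            have hbge : 1 ≤ b := by omega
            interval_cases b <;> omega
          rcases key with rfl | rfl <;> decide
      · have f2 : 7 * k2 ≤ a := kb h7 hk2
        have f3 : 7 * k3 ≤ a := kb (h7.trans h23) hk3
        have ha18 : a ≤ 18 := by omega
        have hb2 : k2 ≤ 2 := by omega
        have hb3 : k3 ≤ 2 := by omega
        have key : (m2 = 7 ∧ m3 = 14) ∨ (m2 = 8 ∧ m3 = 8) ∨ (m2 = 12 ∧ m3 = 12) := by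
          interval_cases k2 <;> interval_cases k3 <;> omega
        rcases key with ⟨rfl, rfl⟩ | ⟨rfl, rfl⟩ | ⟨rfl, rfl⟩ <;> decide
    · rcases Nat.lt_or_ge m2 5 with h5 | h5
      · interval_cases m2
        · -- [3,3,*]
          obtain ⟨b, rfl⟩ : ∃ b, a = 3 * b := ⟨a / 3, by omega⟩
          have hkk : k3 = b - 4 := by omega
          subst hkk
          have hdvA : (b - 4) ∣ 3 * b := ⟨m3, hk3.trans (Nat.mul_comm _ _)⟩
          have hdv1 : (b - 4) ∣ 3 * b := hdvA
          have hdv : (b - 4) ∣ 12 := by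
            have h2' : (b - 4) ∣ 3 * (b - 4) := dvd_mul_left _ _
            have h3' := Nat.dvd_sub hdv1 h2'
            have h4' : 3 * b - 3 * (b - 4) = 12 := by omega
            rwa [h4'] at h3'
          have hble : b ≤ 16 := by have := Nat.le_of_dvd (by norm_num) hdv; omega
          have key : m3 = 4 ∨ m3 = 5 ∨ m3 = 6 ∨ m3 = 7 ∨ m3 = 9 ∨ m3 = 15 := by
            have hbge : 1 ≤ b := by omega
            interval_cases b <;> omega
          rcases key with rfl | rfl | rfl | rfl | rfl | rfl <;> decide
        · -- [3,4,*]
          obtain ⟨e, rfl⟩ : ∃ e, a = 12 * e := ⟨a / 12, by omega⟩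
          have hkk : k3 = 5 * e - 4 := by omega
          subst hkk
          have hdvA : (5 * e - 4) ∣ 12 * e := ⟨m3, hk3.trans (Nat.mul_comm _ _)⟩
          have hdv1 : (5 * e - 4) ∣ 5 * (12 * e) := hdvA.mul_left 5
          have hdv : (5 * e - 4) ∣ 48 := by
            have h2' : (5 * e - 4) ∣ 12 * (5 * e - 4) := dvd_mul_left _ _
            have h3' := Nat.dvd_sub hdv1 h2'
            have h4' : 5 * (12 * e) - 12 * (5 * e - 4) = 48 := by omega
            rwa [h4'] at h3'
          have hble : e ≤ 52 := by have := Nat.le_of_dvd (by norm_num) hdv; omega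
          have key : m3 = 4 ∨ m3 = 12 := by
            have hbge : 1 ≤ e := by omega
            interval_cases e <;> omega
          rcases key with rfl | rfl <;> decide
      · have f2 : 5 * k2 ≤ a := kb h5 hk2
        have f3 : 5 * k3 ≤ a := kb (h5.trans h23) hk3
        have ha15 : a ≤ 15 := by omega
        have hb2 : k2 ≤ 3 := by omega
        have hb3 : k3 ≤ 3 := by omega
        have key : (m2 = 5 ∧ m3 = 5) ∨ (m2 = 6 ∧ m3 = 6) ∨ (m2 = 9 ∧ m3 = 9) := by
          interval_cases k2 <;> interval_cases k3 <;> omega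
        rcases key with ⟨rfl, rfl⟩ | ⟨rfl, rfl⟩ | ⟨rfl, rfl⟩ <;> decide
  · have f1 : 4 * k1 ≤ a := kb h4 hk1
    have f2 : 4 * k2 ≤ a := kb (h4.trans h12) hk2
    have f3 : 4 * k3 ≤ a := kb ((h4.trans h12).trans h23) hk3
    have ha16 : a ≤ 16 := by omega
    have hb1 : k1 ≤ 4 := by omega
    have hb2 : k2 ≤ 4 := by omega
    have hb3 : k3 ≤ 4 := by omega
    have key : (m1 = 4 ∧ m2 = 4 ∧ m3 = 4) ∨ (m1 = 4 ∧ m2 = 4 ∧ m3 = 6) ∨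
        (m1 = 4 ∧ m2 = 8 ∧ m3 = 8) ∨ (m1 = 5 ∧ m2 = 5 ∧ m3 = 5) ∨ (m1 = 7 ∧ m2 = 7 ∧ m3 = 7) := by
      interval_cases k1 <;> interval_cases k2 <;> interval_cases k3 <;> omega
    rcases key with ⟨rfl,rfl,rfl⟩|⟨rfl,rfl,rfl⟩|⟨rfl,rfl,rfl⟩|⟨rfl,rfl,rfl⟩|⟨rfl,rfl,rfl⟩ <;> decide

set_option maxHeartbeats 1600000 in
lemma r4 (a m1 m2 m3 m4 : ℕ) (ha : 0 < a) (h12 : m1 ≤ m2) (h23 : m2 ≤ m3) (h34 : m3 ≤ m4) (hm1 : 2 ≤ m1)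
    (hd1 : m1 ∣ a) (hd2 : m2 ∣ a) (hd3 : m3 ∣ a) (hd4 : m4 ∣ a)
    (heq : a * 4 = 2*a + (a/m1 + a/m2 + a/m3 + a/m4) + 4) :
    [m1, m2, m3, m4] ∈ typesList := by
  obtain ⟨k1, hk1⟩ := hd1
  obtain ⟨k2, hk2⟩ := hd2
  obtain ⟨k3, hk3⟩ := hd3
  obtain ⟨k4, hk4⟩ := hd4
  have e1 : a / m1 = k1 := by rw [hk1]; exact Nat.mul_div_cancel_left _ (by omega)
  have e2 : a / m2 = k2 := by rw [hk2]; exact Nat.mul_div_cancel_left _ (by omega)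
  have e3 : a / m3 = k3 := by rw [hk3]; exact Nat.mul_div_cancel_left _ (by omega)
  have e4 : a / m4 = k4 := by rw [hk4]; exact Nat.mul_div_cancel_left _ (by omega)
  rw [e1, e2, e3, e4] at heq
  have hp1 : 1 ≤ k1 := kpos ha hk1
  have hp2 : 1 ≤ k2 := kpos ha hk2
  have hp3 : 1 ≤ k3 := kpos ha hk3
  have hp4 : 1 ≤ k4 := kpos ha hk4
  have hma1 : m1 ≤ a := mle hk1 hp1
  have hma2 : m2 ≤ a := mle hk2 hp2
  have hma3 : m3 ≤ a := mle hk3 hp3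
  have hma4 : m4 ≤ a := mle hk4 hp4
  have hm2' : 2 ≤ m2 := hm1.trans h12
  have hm3' : 2 ≤ m3 := hm2'.trans h23
  have hm4' : 2 ≤ m4 := hm3'.trans h34
  rcases Nat.lt_or_ge m1 3 with h3a | h3a
  · interval_cases m1
    rcases Nat.lt_or_ge m2 3 with h3b | h3b
    · interval_cases m2
      rcases Nat.lt_or_ge m3 3 with h3c | h3c
      · interval_cases m3
        -- [2,2,2,*]
        obtain ⟨b, rfl⟩ : ∃ b, a = 2 * b := ⟨a / 2, by omega⟩
        have hkk : k4 = b - 4 := by omega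
        subst hkk
        have hdvA : (b - 4) ∣ 2 * b := ⟨m4, hk4.trans (Nat.mul_comm _ _)⟩
        have hdv1 : (b - 4) ∣ 2 * b := hdvA
        have hdv : (b - 4) ∣ 8 := by
          have h2' : (b - 4) ∣ 2 * (b - 4) := dvd_mul_left _ _
          have h3' := Nat.dvd_sub hdv1 h2'
          have h4' : 2 * b - 2 * (b - 4) = 8 := by omega
          rwa [h4'] at h3'
        have hble : b ≤ 12 := by have := Nat.le_of_dvd (by norm_num) hdv; omega
        have key : m4 = 3 ∨ m4 = 4 ∨ m4 = 6 ∨ m4 = 10 := by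
          have hbge : 1 ≤ b := by omega
          interval_cases b <;> omega
        rcases key with rfl | rfl | rfl | rfl <;> decide
      · have f3 : 3 * k3 ≤ a := kb h3c hk3
        have f4 : 3 * k4 ≤ a := kb (h3c.trans h34) hk4
        have ha12 : a ≤ 12 := by omega
        have hb3 : k3 ≤ 4 := by omega
        have hb4 : k4 ≤ 4 := by omega
        have key : (m3 = 3 ∧ m4 = 3) ∨ (m3 = 4 ∧ m4 = 4) ∨ (m3 = 6 ∧ m4 = 6) := by
          interval_cases k3 <;> interval_cases k4 <;> omega
        rcases key with ⟨rfl, rfl⟩ | ⟨rfl, rfl⟩ | ⟨rfl, rfl⟩ <;> decide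
    · have f2 : 3 * k2 ≤ a := kb h3b hk2
      have f3 : 3 * k3 ≤ a := kb (h3b.trans h23) hk3
      have f4 : 3 * k4 ≤ a := kb ((h3b.trans h23).trans h34) hk4
      have ha8 : a ≤ 8 := by omega
      have hb2 : k2 ≤ 2 := by omega
      have hb3 : k3 ≤ 2 := by omega
      have hb4 : k4 ≤ 2 := by omega
      have key : m2 = 3 ∧ m3 = 3 ∧ m4 = 6 := by
        interval_cases k2 <;> interval_cases k3 <;> interval_cases k4 <;> omega
      rcases key with ⟨rfl, rfl, rfl⟩ <;> decide
  · have f1 : 3 * k1 ≤ a := kb h3a hk1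
    have f2 : 3 * k2 ≤ a := kb (h3a.trans h12) hk2
    have f3 : 3 * k3 ≤ a := kb ((h3a.trans h12).trans h23) hk3
    have f4 : 3 * k4 ≤ a := kb (((h3a.trans h12).trans h23).trans h34) hk4
    have ha6 : a ≤ 6 := by omega
    have hb1 : k1 ≤ 2 := by omega
    have hb2 : k2 ≤ 2 := by omega
    have hb3 : k3 ≤ 2 := by omega
    have hb4 : k4 ≤ 2 := by omega
    have key : (m1 = 3 ∧ m2 = 3 ∧ m3 = 3 ∧ m4 = 3) ∨ (m1 = 4 ∧ m2 = 4 ∧ m3 = 4 ∧ m4 = 4) := by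
      interval_cases k1 <;> interval_cases k2 <;> interval_cases k3 <;> interval_cases k4 <;> omega
    rcases key with ⟨rfl,rfl,rfl,rfl⟩ | ⟨rfl,rfl,rfl,rfl⟩ <;> decide

set_option maxHeartbeats 1600000 in
lemma r5 (a m1 m2 m3 m4 m5 : ℕ) (ha : 0 < a) (h12 : m1 ≤ m2) (h23 : m2 ≤ m3) (h34 : m3 ≤ m4) (h45 : m4 ≤ m5) (hm1 : 2 ≤ m1)
    (hd1 : m1 ∣ a) (hd2 : m2 ∣ a) (hd3 : m3 ∣ a) (hd4 : m4 ∣ a) (hd5 : m5 ∣ a)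
    (heq : a * 5 = 2*a + (a/m1 + a/m2 + a/m3 + a/m4 + a/m5) + 4) :
    [m1, m2, m3, m4, m5] ∈ typesList := by
  obtain ⟨k1, hk1⟩ := hd1
  obtain ⟨k2, hk2⟩ := hd2
  obtain ⟨k3, hk3⟩ := hd3
  obtain ⟨k4, hk4⟩ := hd4
  obtain ⟨k5, hk5⟩ := hd5
  have e1 : a / m1 = k1 := by rw [hk1]; exact Nat.mul_div_cancel_left _ (by omega)
  have e2 : a / m2 = k2 := by rw [hk2]; exact Nat.mul_div_cancel_left _ (by omega)
  have e3 : a / m3 = k3 := by rw [hk3]; exact Nat.mul_div_cancel_left _ (by omega)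
  have e4 : a / m4 = k4 := by rw [hk4]; exact Nat.mul_div_cancel_left _ (by omega)
  have e5 : a / m5 = k5 := by rw [hk5]; exact Nat.mul_div_cancel_left _ (by omega)
  rw [e1, e2, e3, e4, e5] at heq
  have hp1 : 1 ≤ k1 := kpos ha hk1
  have hp2 : 1 ≤ k2 := kpos ha hk2
  have hp3 : 1 ≤ k3 := kpos ha hk3
  have hp4 : 1 ≤ k4 := kpos ha hk4
  have hp5 : 1 ≤ k5 := kpos ha hk5
  have hma1 : m1 ≤ a := mle hk1 hp1
  have hma2 : m2 ≤ a := mle hk2 hp2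
  have hma3 : m3 ≤ a := mle hk3 hp3
  have hma4 : m4 ≤ a := mle hk4 hp4
  have hma5 : m5 ≤ a := mle hk5 hp5
  have hm2' : 2 ≤ m2 := hm1.trans h12
  have hm3' : 2 ≤ m3 := hm2'.trans h23
  have hm4' : 2 ≤ m4 := hm3'.trans h34
  have hm5' : 2 ≤ m5 := hm4'.trans h45
  rcases Nat.lt_or_ge m1 3 with h3a | h3a
  · interval_cases m1
    rcases Nat.lt_or_ge m2 3 with h3b | h3b
    · interval_cases m2
      rcases Nat.lt_or_ge m3 3 with h3c | h3c
      · interval_cases m3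
        rcases Nat.lt_or_ge m4 3 with h3d | h3d
        · interval_cases m4
          -- [2,2,2,2,*]
          obtain ⟨b, rfl⟩ : ∃ b, a = 2 * b := ⟨a / 2, by omega⟩
          have hkk : k5 = 2 * b - 4 := by omega
          subst hkk
          have hdvA : (2 * b - 4) ∣ 2 * b := ⟨m5, hk5.trans (Nat.mul_comm _ _)⟩
          have hdv1 : (2 * b - 4) ∣ 2 * (2 * b) := hdvA.mul_left 2
          have hdv : (2 * b - 4) ∣ 8 := by
            have h2' : (2 * b - 4) ∣ 2 * (2 * b - 4) := dvd_mul_left _ _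
            have h3' := Nat.dvd_sub hdv1 h2'
            have h4' : 2 * (2 * b) - 2 * (2 * b - 4) = 8 := by omega
            rwa [h4'] at h3'
          have hble : b ≤ 12 := by have := Nat.le_of_dvd (by norm_num) hdv; omega
          have key : m5 = 2 ∨ m5 = 3 := by
            have hbge : 1 ≤ b := by omega
            interval_cases b <;> omega
          rcases key with rfl | rfl <;> decide
        · have f4 : 3 * k4 ≤ a := kb h3d hk4
          have f5 : 3 * k5 ≤ a := kb (h3d.trans h45) hk5
          have ha4 : a ≤ 4 := by omega
          have haeq : a = 4 := by interval_cases a <;> omega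
          subst haeq
          have hbk4 : k4 = 1 := by omega
          subst hbk4
          have hbk5 : k5 = 1 := by omega
          subst hbk5
          have key : m4 = 4 ∧ m5 = 4 := by omega
          rcases key with ⟨rfl, rfl⟩
          decide
      · exfalso
        have f3 : 3 * k3 ≤ a := kb h3c hk3
        have f4 : 3 * k4 ≤ a := kb (h3c.trans h34) hk4
        have f5 : 3 * k5 ≤ a := kb ((h3c.trans h34).trans h45) hk5
        have ha4 : a ≤ 4 := by omega
        interval_cases a <;> omega
    · exfalso
      have f2 : 3 * k2 ≤ a := kb h3b hk2
      have f3 : 3 * k3 ≤ a := kb (h3b.trans h23) hk3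
      have f4 : 3 * k4 ≤ a := kb ((h3b.trans h23).trans h34) hk4
      have f5 : 3 * k5 ≤ a := kb (((h3b.trans h23).trans h34).trans h45) hk5
      omega
  · have f1 : 3 * k1 ≤ a := kb h3a hk1
    have f2 : 3 * k2 ≤ a := kb (h3a.trans h12) hk2
    have f3 : 3 * k3 ≤ a := kb ((h3a.trans h12).trans h23) hk3
    have f4 : 3 * k4 ≤ a := kb (((h3a.trans h12).trans h23).trans h34) hk4
    have f5 : 3 * k5 ≤ a := kb ((((h3a.trans h12).trans h23).trans h34).trans h45) hk5
    have ha3 : a ≤ 3 := by omega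
    have haeq : a = 3 := by interval_cases a <;> omega
    subst haeq
    have hbk1 : k1 = 1 := by omega
    subst hbk1
    have hbk2 : k2 = 1 := by omega
    subst hbk2
    have hbk3 : k3 = 1 := by omega
    subst hbk3
    have hbk4 : k4 = 1 := by omega
    subst hbk4
    have hbk5 : k5 = 1 := by omega
    subst hbk5
    have key : m1 = 3 ∧ m2 = 3 ∧ m3 = 3 ∧ m4 = 3 ∧ m5 = 3 := by omega
    rcases key with ⟨rfl,rfl,rfl,rfl,rfl⟩
    decide

set_option maxHeartbeats 1600000 in
lemma r6 (a m1 m2 m3 m4 m5 m6 : ℕ) (ha : 0 < a) (h12 : m1 ≤ m2) (h23 : m2 ≤ m3) (h34 : m3 ≤ m4) (h45 : m4 ≤ m5) (h56 : m5 ≤ m6) (hm1 : 2 ≤ m1)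
    (hd1 : m1 ∣ a) (hd2 : m2 ∣ a) (hd3 : m3 ∣ a) (hd4 : m4 ∣ a) (hd5 : m5 ∣ a) (hd6 : m6 ∣ a)
    (heq : a * 6 = 2*a + (a/m1 + a/m2 + a/m3 + a/m4 + a/m5 + a/m6) + 4) :
    [m1, m2, m3, m4, m5, m6] ∈ typesList := by
  obtain ⟨k1, hk1⟩ := hd1
  obtain ⟨k2, hk2⟩ := hd2
  obtain ⟨k3, hk3⟩ := hd3
  obtain ⟨k4, hk4⟩ := hd4
  obtain ⟨k5, hk5⟩ := hd5
  obtain ⟨k6, hk6⟩ := hd6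
  have e1 : a / m1 = k1 := by rw [hk1]; exact Nat.mul_div_cancel_left _ (by omega)
  have e2 : a / m2 = k2 := by rw [hk2]; exact Nat.mul_div_cancel_left _ (by omega)
  have e3 : a / m3 = k3 := by rw [hk3]; exact Nat.mul_div_cancel_left _ (by omega)
  have e4 : a / m4 = k4 := by rw [hk4]; exact Nat.mul_div_cancel_left _ (by omega)
  have e5 : a / m5 = k5 := by rw [hk5]; exact Nat.mul_div_cancel_left _ (by omega)
  have e6 : a / m6 = k6 := by rw [hk6]; exact Nat.mul_div_cancel_left _ (by omega)
  rw [e1, e2, e3, e4, e5, e6] at heq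
  have hp1 : 1 ≤ k1 := kpos ha hk1
  have hp2 : 1 ≤ k2 := kpos ha hk2
  have hp3 : 1 ≤ k3 := kpos ha hk3
  have hp4 : 1 ≤ k4 := kpos ha hk4
  have hp5 : 1 ≤ k5 := kpos ha hk5
  have hp6 : 1 ≤ k6 := kpos ha hk6
  have hma1 : m1 ≤ a := mle hk1 hp1
  have hma2 : m2 ≤ a := mle hk2 hp2
  have hma3 : m3 ≤ a := mle hk3 hp3
  have hma4 : m4 ≤ a := mle hk4 hp4
  have hma5 : m5 ≤ a := mle hk5 hp5
  have hma6 : m6 ≤ a := mle hk6 hp6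
  have hm2' : 2 ≤ m2 := hm1.trans h12
  have hm3' : 2 ≤ m3 := hm2'.trans h23
  have hm4' : 2 ≤ m4 := hm3'.trans h34
  have hm5' : 2 ≤ m5 := hm4'.trans h45
  have hm6' : 2 ≤ m6 := hm5'.trans h56
  have f1 : 2 * k1 ≤ a := kb hm1 hk1
  have f2 : 2 * k2 ≤ a := kb hm2' hk2
  have f3 : 2 * k3 ≤ a := kb hm3' hk3
  have f4 : 2 * k4 ≤ a := kb hm4' hk4
  have f5 : 2 * k5 ≤ a := kb hm5' hk5
  have f6 : 2 * k6 ≤ a := kb hm6' hk6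
  have ha4 : a ≤ 4 := by omega
  have haeq : a = 4 := by interval_cases a <;> omega
  subst haeq
  have hbk1 : k1 = 2 := by omega
  subst hbk1
  have hbk2 : k2 = 2 := by omega
  subst hbk2
  have hbk3 : k3 = 2 := by omega
  subst hbk3
  have hbk4 : k4 = 2 := by omega
  subst hbk4
  have hbk5 : k5 = 2 := by omega
  subst hbk5
  have hbk6 : k6 = 2 := by omega
  subst hbk6
  have key : m1 = 2 ∧ m2 = 2 ∧ m3 = 2 ∧ m4 = 2 ∧ m5 = 2 ∧ m6 = 2 := by omega
  rcases key with ⟨rfl,rfl,rfl,rfl,rfl,rfl⟩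
  decide

lemma r7 (a m1 m2 m3 m4 m5 m6 m7 : ℕ) (ha : 0 < a) (h12 : m1 ≤ m2) (h23 : m2 ≤ m3) (h34 : m3 ≤ m4) (h45 : m4 ≤ m5) (h56 : m5 ≤ m6) (h67 : m6 ≤ m7) (hm1 : 2 ≤ m1)
    (hd1 : m1 ∣ a) (hd2 : m2 ∣ a) (hd3 : m3 ∣ a) (hd4 : m4 ∣ a) (hd5 : m5 ∣ a) (hd6 : m6 ∣ a) (hd7 : m7 ∣ a)
    (heq : a * 7 = 2*a + (a/m1 + a/m2 + a/m3 + a/m4 + a/m5 + a/m6 + a/m7) + 4) : False := by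
  obtain ⟨k1, hk1⟩ := hd1
  obtain ⟨k2, hk2⟩ := hd2
  obtain ⟨k3, hk3⟩ := hd3
  obtain ⟨k4, hk4⟩ := hd4
  obtain ⟨k5, hk5⟩ := hd5
  obtain ⟨k6, hk6⟩ := hd6
  obtain ⟨k7, hk7⟩ := hd7
  have e1 : a / m1 = k1 := by rw [hk1]; exact Nat.mul_div_cancel_left _ (by omega)
  have e2 : a / m2 = k2 := by rw [hk2]; exact Nat.mul_div_cancel_left _ (by omega)
  have e3 : a / m3 = k3 := by rw [hk3]; exact Nat.mul_div_cancel_left _ (by omega)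
  have e4 : a / m4 = k4 := by rw [hk4]; exact Nat.mul_div_cancel_left _ (by omega)
  have e5 : a / m5 = k5 := by rw [hk5]; exact Nat.mul_div_cancel_left _ (by omega)
  have e6 : a / m6 = k6 := by rw [hk6]; exact Nat.mul_div_cancel_left _ (by omega)
  have e7 : a / m7 = k7 := by rw [hk7]; exact Nat.mul_div_cancel_left _ (by omega)
  rw [e1, e2, e3, e4, e5, e6, e7] at heq
  have hp1 : 1 ≤ k1 := kpos ha hk1
  have hp2 : 1 ≤ k2 := kpos ha hk2
  have hp3 : 1 ≤ k3 := kpos ha hk3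
  have hp4 : 1 ≤ k4 := kpos ha hk4
  have hp5 : 1 ≤ k5 := kpos ha hk5
  have hp6 : 1 ≤ k6 := kpos ha hk6
  have hp7 : 1 ≤ k7 := kpos ha hk7
  have hma1 : m1 ≤ a := mle hk1 hp1
  have hm2' : 2 ≤ m2 := hm1.trans h12
  have hm3' : 2 ≤ m3 := hm2'.trans h23
  have hm4' : 2 ≤ m4 := hm3'.trans h34
  have hm5' : 2 ≤ m5 := hm4'.trans h45
  have hm6' : 2 ≤ m6 := hm5'.trans h56
  have hm7' : 2 ≤ m7 := hm6'.trans h67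
  have f1 : 2 * k1 ≤ a := kb hm1 hk1
  have f2 : 2 * k2 ≤ a := kb hm2' hk2
  have f3 : 2 * k3 ≤ a := kb hm3' hk3
  have f4 : 2 * k4 ≤ a := kb hm4' hk4
  have f5 : 2 * k5 ≤ a := kb hm5' hk5
  have f6 : 2 * k6 ≤ a := kb hm6' hk6
  have f7 : 2 * k7 ≤ a := kb hm7' hk7
  omega

set_option maxHeartbeats 1600000 in
lemma r8 (a m1 m2 m3 m4 m5 m6 m7 m8 : ℕ) (ha : 0 < a) (h12 : m1 ≤ m2) (h23 : m2 ≤ m3) (h34 : m3 ≤ m4) (h45 : m4 ≤ m5) (h56 : m5 ≤ m6) (h67 : m6 ≤ m7) (h78 : m7 ≤ m8) (hm1 : 2 ≤ m1)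
    (hd1 : m1 ∣ a) (hd2 : m2 ∣ a) (hd3 : m3 ∣ a) (hd4 : m4 ∣ a) (hd5 : m5 ∣ a) (hd6 : m6 ∣ a) (hd7 : m7 ∣ a) (hd8 : m8 ∣ a)
    (heq : a * 8 = 2*a + (a/m1 + a/m2 + a/m3 + a/m4 + a/m5 + a/m6 + a/m7 + a/m8) + 4) :
    [m1, m2, m3, m4, m5, m6, m7, m8] ∈ typesList := by
  obtain ⟨k1, hk1⟩ := hd1
  obtain ⟨k2, hk2⟩ := hd2
  obtain ⟨k3, hk3⟩ := hd3
  obtain ⟨k4, hk4⟩ := hd4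
  obtain ⟨k5, hk5⟩ := hd5
  obtain ⟨k6, hk6⟩ := hd6
  obtain ⟨k7, hk7⟩ := hd7
  obtain ⟨k8, hk8⟩ := hd8
  have e1 : a / m1 = k1 := by rw [hk1]; exact Nat.mul_div_cancel_left _ (by omega)
  have e2 : a / m2 = k2 := by rw [hk2]; exact Nat.mul_div_cancel_left _ (by omega)
  have e3 : a / m3 = k3 := by rw [hk3]; exact Nat.mul_div_cancel_left _ (by omega)
  have e4 : a / m4 = k4 := by rw [hk4]; exact Nat.mul_div_cancel_left _ (by omega)
  have e5 : a / m5 = k5 := by rw [hk5]; exact Nat.mul_div_cancel_left _ (by omega)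
  have e6 : a / m6 = k6 := by rw [hk6]; exact Nat.mul_div_cancel_left _ (by omega)
  have e7 : a / m7 = k7 := by rw [hk7]; exact Nat.mul_div_cancel_left _ (by omega)
  have e8 : a / m8 = k8 := by rw [hk8]; exact Nat.mul_div_cancel_left _ (by omega)
  rw [e1, e2, e3, e4, e5, e6, e7, e8] at heq
  have hp1 : 1 ≤ k1 := kpos ha hk1
  have hp2 : 1 ≤ k2 := kpos ha hk2
  have hp3 : 1 ≤ k3 := kpos ha hk3
  have hp4 : 1 ≤ k4 := kpos ha hk4
  have hp5 : 1 ≤ k5 := kpos ha hk5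
  have hp6 : 1 ≤ k6 := kpos ha hk6
  have hp7 : 1 ≤ k7 := kpos ha hk7
  have hp8 : 1 ≤ k8 := kpos ha hk8
  have hma1 : m1 ≤ a := mle hk1 hp1
  have hma2 : m2 ≤ a := mle hk2 hp2
  have hma3 : m3 ≤ a := mle hk3 hp3
  have hma4 : m4 ≤ a := mle hk4 hp4
  have hma5 : m5 ≤ a := mle hk5 hp5
  have hma6 : m6 ≤ a := mle hk6 hp6
  have hma7 : m7 ≤ a := mle hk7 hp7
  have hma8 : m8 ≤ a := mle hk8 hp8
  have hm2' : 2 ≤ m2 := hm1.trans h12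
  have hm3' : 2 ≤ m3 := hm2'.trans h23
  have hm4' : 2 ≤ m4 := hm3'.trans h34
  have hm5' : 2 ≤ m5 := hm4'.trans h45
  have hm6' : 2 ≤ m6 := hm5'.trans h56
  have hm7' : 2 ≤ m7 := hm6'.trans h67
  have hm8' : 2 ≤ m8 := hm7'.trans h78
  have f1 : 2 * k1 ≤ a := kb hm1 hk1
  have f2 : 2 * k2 ≤ a := kb hm2' hk2
  have f3 : 2 * k3 ≤ a := kb hm3' hk3
  have f4 : 2 * k4 ≤ a := kb hm4' hk4
  have f5 : 2 * k5 ≤ a := kb hm5' hk5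
  have f6 : 2 * k6 ≤ a := kb hm6' hk6
  have f7 : 2 * k7 ≤ a := kb hm7' hk7
  have f8 : 2 * k8 ≤ a := kb hm8' hk8
  have ha2' : a ≤ 2 := by omega
  have haeq : a = 2 := by interval_cases a <;> omega
  subst haeq
  have hbk1 : k1 = 1 := by omega
  subst hbk1
  have hbk2 : k2 = 1 := by omega
  subst hbk2
  have hbk3 : k3 = 1 := by omega
  subst hbk3
  have hbk4 : k4 = 1 := by omega
  subst hbk4
  have hbk5 : k5 = 1 := by omega
  subst hbk5
  have hbk6 : k6 = 1 := by omega
  subst hbk6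
  have hbk7 : k7 = 1 := by omega
  subst hbk7
  have hbk8 : k8 = 1 := by omega
  subst hbk8
  have key : m1 = 2 ∧ m2 = 2 ∧ m3 = 2 ∧ m4 = 2 ∧ m5 = 2 ∧ m6 = 2 ∧ m7 = 2 ∧ m8 = 2 := by omega
  rcases key with ⟨rfl,rfl,rfl,rfl,rfl,rfl,rfl,rfl⟩
  decide

set_option maxHeartbeats 1600000 in
theorem isType_iff_mem_list (T : List ℕ) :
    IsType T ↔ T ∈ [
      [2,3,7], [2,3,8], [2,4,5], [2,3,9], [2,3,10],
      [2,3,12], [2,4,6], [3,3,4], [2,3,14], [2,5,5],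
      [2,3,18], [2,4,8], [2,3,30], [2,5,6], [3,3,5],
      [2,4,12], [2,6,6], [3,4,4], [3,3,6], [2,2,2,3],
      [3,3,7], [2,4,20], [2,5,10], [2,6,9], [3,3,9],
      [2,8,8], [4,4,4], [2,2,2,4], [3,5,5], [3,3,15],
      [2,7,14], [2,12,12], [3,4,12], [3,6,6], [4,4,6],
      [2,2,2,6], [2,2,3,3], [5,5,5], [2,2,2,10], [3,9,9],
      [4,8,8], [2,2,4,4], [2,2,2,2,2], [7,7,7], [2,2,6,6],
      [2,3,3,6], [3,3,3,3], [2,2,2,2,3], [4,4,4,4], [2,2,2,4,4],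
      [2,2,2,2,2,2], [3,3,3,3,3], [2,2,2,2,2,2,2,2] ] := by
  constructor
  · rintro ⟨hlen, hsort, h2, hpos, a, ha, hth, hdvd⟩
    show T ∈ typesList
    have heqN := nat_equation h2 hdvd hth
    have hs2 := two_mul_sum_le h2 hdvd
    rcases T with _ | ⟨m1, T⟩
    · simp at hlen
    rcases T with _ | ⟨m2, T⟩
    · simp at hlen
    rcases T with _ | ⟨m3, T⟩
    · simp at hlen
    have hm1 : 2 ≤ m1 := h2 _ (by simp)
    have ha2 : 2 ≤ a := le_trans hm1 (Nat.le_of_dvd ha (hdvd _ (by simp)))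
    rcases T with _ | ⟨m4, T⟩
    · -- length 3
      obtain ⟨⟨h12, -⟩, h23⟩ := by
        simpa [List.pairwise_cons] using hsort
      have heq : a * 3 = 2*a + (a/m1 + a/m2 + a/m3) + 4 := by
        simp at heqN; linarith
      exact r3 a m1 m2 m3 ha h12 h23 hm1 (hdvd _ (by simp)) (hdvd _ (by simp)) (hdvd _ (by simp)) heq
    rcases T with _ | ⟨m5, T⟩
    · -- length 4
      obtain ⟨⟨h12, -, -⟩, ⟨h23, -⟩, h34⟩ := by
        simpa [List.pairwise_cons] using hsort
      have heq : a * 4 = 2*a + (a/m1 + a/m2 + a/m3 + a/m4) + 4 := by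
        simp at heqN; linarith
      exact r4 a m1 m2 m3 m4 ha h12 h23 h34 hm1 (hdvd _ (by simp)) (hdvd _ (by simp)) (hdvd _ (by simp)) (hdvd _ (by simp)) heq
    rcases T with _ | ⟨m6, T⟩
    · -- length 5
      obtain ⟨⟨h12, -, -, -⟩, ⟨h23, -, -⟩, ⟨h34, -⟩, h45⟩ := by
        simpa [List.pairwise_cons] using hsort
      have heq : a * 5 = 2*a + (a/m1 + a/m2 + a/m3 + a/m4 + a/m5) + 4 := by
        simp at heqN; linarith
      exact r5 a m1 m2 m3 m4 m5 ha h12 h23 h34 h45 hm1 (hdvd _ (by simp)) (hdvd _ (by simp)) (hdvd _ (by simp)) (hdvd _ (by simp)) (hdvd _ (by simp)) heq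
    rcases T with _ | ⟨m7, T⟩
    · -- length 6
      obtain ⟨⟨h12, -, -, -, -⟩, ⟨h23, -, -, -⟩, ⟨h34, -, -⟩, ⟨h45, -⟩, h56⟩ := by
        simpa [List.pairwise_cons] using hsort
      have heq : a * 6 = 2*a + (a/m1 + a/m2 + a/m3 + a/m4 + a/m5 + a/m6) + 4 := by
        simp at heqN; linarith
      exact r6 a m1 m2 m3 m4 m5 m6 ha h12 h23 h34 h45 h56 hm1 (hdvd _ (by simp)) (hdvd _ (by simp)) (hdvd _ (by simp)) (hdvd _ (by simp)) (hdvd _ (by simp)) (hdvd _ (by simp)) heq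
    rcases T with _ | ⟨m8, T⟩
    · -- length 7
      obtain ⟨⟨h12, -, -, -, -, -⟩, ⟨h23, -, -, -, -⟩, ⟨h34, -, -, -⟩, ⟨h45, -, -⟩, ⟨h56, -⟩, h67⟩ := by
        simpa [List.pairwise_cons] using hsort
      have heq : a * 7 = 2*a + (a/m1 + a/m2 + a/m3 + a/m4 + a/m5 + a/m6 + a/m7) + 4 := by
        simp at heqN; linarith
      exact absurd (r7 a m1 m2 m3 m4 m5 m6 m7 ha h12 h23 h34 h45 h56 h67 hm1 (hdvd _ (by simp)) (hdvd _ (by simp)) (hdvd _ (by simp)) (hdvd _ (by simp)) (hdvd _ (by simp)) (hdvd _ (by simp)) (hdvd _ (by simp)) heq) (by simp)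
    rcases T with _ | ⟨m9, T⟩
    · -- length 8
      obtain ⟨⟨h12, -, -, -, -, -, -⟩, ⟨h23, -, -, -, -, -⟩, ⟨h34, -, -, -, -⟩, ⟨h45, -, -, -⟩, ⟨h56, -, -⟩, ⟨h67, -⟩, h78⟩ := by
        simpa [List.pairwise_cons] using hsort
      have heq : a * 8 = 2*a + (a/m1 + a/m2 + a/m3 + a/m4 + a/m5 + a/m6 + a/m7 + a/m8) + 4 := by
        simp at heqN; linarith
      exact r8 a m1 m2 m3 m4 m5 m6 m7 m8 ha h12 h23 h34 h45 h56 h67 h78 hm1 (hdvd _ (by simp)) (hdvd _ (by simp)) (hdvd _ (by simp)) (hdvd _ (by simp)) (hdvd _ (by simp)) (hdvd _ (by simp)) (hdvd _ (by simp)) (hdvd _ (by simp)) heq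
    exact absurd (too_long ha2 (by simp only [List.length_cons]; omega) heqN hs2) (by simp)
  · intro h
    simp only [List.mem_cons, List.not_mem_nil, or_false] at h
    rcases h with rfl | rfl | rfl | rfl | rfl | rfl | rfl | rfl | rfl | rfl | rfl | rfl | rfl | rfl | rfl | rfl | rfl | rfl | rfl | rfl | rfl | rfl | rfl | rfl | rfl | rfl | rfl | rfl | rfl | rfl | rfl | rfl | rfl | rfl | rfl | rfl | rfl | rfl | rfl | rfl | rfl | rfl | rfl | rfl | rfl | rfl | rfl | rfl | rfl | rfl | rfl | rfl | rfl
    · exact isType_of _ 168 (by norm_num) (by decide) (by decide) (by norm_num) (by rw [theta_eq]; norm_num) (by decide)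
    · exact isType_of _ 96 (by norm_num) (by decide) (by decide) (by norm_num) (by rw [theta_eq]; norm_num) (by decide)
    · exact isType_of _ 80 (by norm_num) (by decide) (by decide) (by norm_num) (by rw [theta_eq]; norm_num) (by decide)
    · exact isType_of _ 72 (by norm_num) (by decide) (by decide) (by norm_num) (by rw [theta_eq]; norm_num) (by decide)
    · exact isType_of _ 60 (by norm_num) (by decide) (by decide) (by norm_num) (by rw [theta_eq]; norm_num) (by decide)
    · exact isType_of _ 48 (by norm_num) (by decide) (by decide) (by norm_num) (by rw [theta_eq]; norm_num) (by decide)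
    · exact isType_of _ 48 (by norm_num) (by decide) (by decide) (by norm_num) (by rw [theta_eq]; norm_num) (by decide)
    · exact isType_of _ 48 (by norm_num) (by decide) (by decide) (by norm_num) (by rw [theta_eq]; norm_num) (by decide)
    · exact isType_of _ 42 (by norm_num) (by decide) (by decide) (by norm_num) (by rw [theta_eq]; norm_num) (by decide)
    · exact isType_of _ 40 (by norm_num) (by decide) (by decide) (by norm_num) (by rw [theta_eq]; norm_num) (by decide)
    · exact isType_of _ 36 (by norm_num) (by decide) (by decide) (by norm_num) (by rw [theta_eq]; norm_num) (by decide)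
    · exact isType_of _ 32 (by norm_num) (by decide) (by decide) (by norm_num) (by rw [theta_eq]; norm_num) (by decide)
    · exact isType_of _ 30 (by norm_num) (by decide) (by decide) (by norm_num) (by rw [theta_eq]; norm_num) (by decide)
    · exact isType_of _ 30 (by norm_num) (by decide) (by decide) (by norm_num) (by rw [theta_eq]; norm_num) (by decide)
    · exact isType_of _ 30 (by norm_num) (by decide) (by decide) (by norm_num) (by rw [theta_eq]; norm_num) (by decide)
    · exact isType_of _ 24 (by norm_num) (by decide) (by decide) (by norm_num) (by rw [theta_eq]; norm_num) (by decide)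
    · exact isType_of _ 24 (by norm_num) (by decide) (by decide) (by norm_num) (by rw [theta_eq]; norm_num) (by decide)
    · exact isType_of _ 24 (by norm_num) (by decide) (by decide) (by norm_num) (by rw [theta_eq]; norm_num) (by decide)
    · exact isType_of _ 24 (by norm_num) (by decide) (by decide) (by norm_num) (by rw [theta_eq]; norm_num) (by decide)
    · exact isType_of _ 24 (by norm_num) (by decide) (by decide) (by norm_num) (by rw [theta_eq]; norm_num) (by decide)
    · exact isType_of _ 21 (by norm_num) (by decide) (by decide) (by norm_num) (by rw [theta_eq]; norm_num) (by decide)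
    · exact isType_of _ 20 (by norm_num) (by decide) (by decide) (by norm_num) (by rw [theta_eq]; norm_num) (by decide)
    · exact isType_of _ 20 (by norm_num) (by decide) (by decide) (by norm_num) (by rw [theta_eq]; norm_num) (by decide)
    · exact isType_of _ 18 (by norm_num) (by decide) (by decide) (by norm_num) (by rw [theta_eq]; norm_num) (by decide)
    · exact isType_of _ 18 (by norm_num) (by decide) (by decide) (by norm_num) (by rw [theta_eq]; norm_num) (by decide)
    · exact isType_of _ 16 (by norm_num) (by decide) (by decide) (by norm_num) (by rw [theta_eq]; norm_num) (by decide)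
    · exact isType_of _ 16 (by norm_num) (by decide) (by decide) (by norm_num) (by rw [theta_eq]; norm_num) (by decide)
    · exact isType_of _ 16 (by norm_num) (by decide) (by decide) (by norm_num) (by rw [theta_eq]; norm_num) (by decide)
    · exact isType_of _ 15 (by norm_num) (by decide) (by decide) (by norm_num) (by rw [theta_eq]; norm_num) (by decide)
    · exact isType_of _ 15 (by norm_num) (by decide) (by decide) (by norm_num) (by rw [theta_eq]; norm_num) (by decide)
    · exact isType_of _ 14 (by norm_num) (by decide) (by decide) (by norm_num) (by rw [theta_eq]; norm_num) (by decide)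
    · exact isType_of _ 12 (by norm_num) (by decide) (by decide) (by norm_num) (by rw [theta_eq]; norm_num) (by decide)
    · exact isType_of _ 12 (by norm_num) (by decide) (by decide) (by norm_num) (by rw [theta_eq]; norm_num) (by decide)
    · exact isType_of _ 12 (by norm_num) (by decide) (by decide) (by norm_num) (by rw [theta_eq]; norm_num) (by decide)
    · exact isType_of _ 12 (by norm_num) (by decide) (by decide) (by norm_num) (by rw [theta_eq]; norm_num) (by decide)
    · exact isType_of _ 12 (by norm_num) (by decide) (by decide) (by norm_num) (by rw [theta_eq]; norm_num) (by decide)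
    · exact isType_of _ 12 (by norm_num) (by decide) (by decide) (by norm_num) (by rw [theta_eq]; norm_num) (by decide)
    · exact isType_of _ 10 (by norm_num) (by decide) (by decide) (by norm_num) (by rw [theta_eq]; norm_num) (by decide)
    · exact isType_of _ 10 (by norm_num) (by decide) (by decide) (by norm_num) (by rw [theta_eq]; norm_num) (by decide)
    · exact isType_of _ 9 (by norm_num) (by decide) (by decide) (by norm_num) (by rw [theta_eq]; norm_num) (by decide)
    · exact isType_of _ 8 (by norm_num) (by decide) (by decide) (by norm_num) (by rw [theta_eq]; norm_num) (by decide)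
    · exact isType_of _ 8 (by norm_num) (by decide) (by decide) (by norm_num) (by rw [theta_eq]; norm_num) (by decide)
    · exact isType_of _ 8 (by norm_num) (by decide) (by decide) (by norm_num) (by rw [theta_eq]; norm_num) (by decide)
    · exact isType_of _ 7 (by norm_num) (by decide) (by decide) (by norm_num) (by rw [theta_eq]; norm_num) (by decide)
    · exact isType_of _ 6 (by norm_num) (by decide) (by decide) (by norm_num) (by rw [theta_eq]; norm_num) (by decide)
    · exact isType_of _ 6 (by norm_num) (by decide) (by decide) (by norm_num) (by rw [theta_eq]; norm_num) (by decide)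
    · exact isType_of _ 6 (by norm_num) (by decide) (by decide) (by norm_num) (by rw [theta_eq]; norm_num) (by decide)
    · exact isType_of _ 6 (by norm_num) (by decide) (by decide) (by norm_num) (by rw [theta_eq]; norm_num) (by decide)
    · exact isType_of _ 4 (by norm_num) (by decide) (by decide) (by norm_num) (by rw [theta_eq]; norm_num) (by decide)
    · exact isType_of _ 4 (by norm_num) (by decide) (by decide) (by norm_num) (by rw [theta_eq]; norm_num) (by decide)
    · exact isType_of _ 4 (by norm_num) (by decide) (by decide) (by norm_num) (by rw [theta_eq]; norm_num) (by decide)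
    · exact isType_of _ 3 (by norm_num) (by decide) (by decide) (by norm_num) (by rw [theta_eq]; norm_num) (by decide)
    · exact isType_of _ 2 (by norm_num) (by decide) (by decide) (by norm_num) (by rw [theta_eq]; norm_num) (by decide)
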